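/- Let G be a finite group. Then the graph Γ(G) coincides with the commuting graph Γ_comm(G) (same vertex set and same edge set) if and only if every Sylow subgroup of G is abelian. -/

import Mathlib

/-- The nilpotent neighborhood of `x`: elements `y` such that `⟨x,y⟩` is nilpotent. -/
def nilNbhd {G : Type*} [Group G] (x : G) : Set G :=
  {y | Group.IsNilpotent ↥(Subgroup.closure ({x, y} : Set G))}

/-- The hypercenter of a finite group: the stable term of the upper central series. -/
noncomputable def hypercenter (G : Type*) [Group G] : Subgroup G :=
  upperCentralSeries G (Nat.card G)

instance hypercenter_normal (G : Type*) [Group G] : (hypercenter G).Normal :=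
  show (Subgroup.upperCentralSeries G (Nat.card G)).Normal from inferInstance

/-- The graph Γ(G): induced subgraph of the nilpotent graph on `G \ Z_∞(G)`. -/
def nilGraph (G : Type*) [Group G] : SimpleGraph {x : G // x ∉ hypercenter G} where
  Adj a b := a ≠ b ∧ Group.IsNilpotent ↥(Subgroup.closure ({a.1, b.1} : Set G))
  symm := ⟨fun a b ⟨h1, h2⟩ => ⟨h1.symm, by rwa [Set.pair_comm]⟩⟩
  loopless := ⟨fun a h => h.1 rfl⟩

/-- The commuting graph on the non-central elements. -/
def commGraph (G : Type*) [Group G] : SimpleGraph {x : G // x ∉ Subgroup.center G} where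
  Adj a b := a ≠ b ∧ a.1 * b.1 = b.1 * a.1
  symm := ⟨fun a b ⟨h1, h2⟩ => ⟨h1.symm, h2.symm⟩⟩
  loopless := ⟨fun a h => h.1 rfl⟩

/-- Diameter of a connected component: diameter of the induced subgraph on its support. -/
noncomputable def compDiam {V : Type*} (Γ : SimpleGraph V) (c : Γ.ConnectedComponent) : ℕ :=
  (Γ.induce c.supp).diam

/-- `H` is a Frobenius complement in `G`. -/
def IsFrobeniusComplement {G : Type*} [Group G] (H : Subgroup G) : Prop :=
  H ≠ ⊥ ∧ H ≠ ⊤ ∧ ∀ g : G, g ∉ H → H ⊓ H.map (MulAut.conj g).toMonoidHom = ⊥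

/-- `G` is a Frobenius group. -/
def IsFrobenius (G : Type*) [Group G] : Prop :=
  ∃ H : Subgroup G, IsFrobeniusComplement H

/-- `K` is the Frobenius kernel corresponding to the complement `H`. -/
def IsFrobeniusKernelOf {G : Type*} [Group G] (K H : Subgroup G) : Prop :=
  IsFrobeniusComplement H ∧
    (K : Set G) = {1} ∪ {x : G | ∀ g : G, x ∉ H.map (MulAut.conj g).toMonoidHom}

/-- `K` is a Frobenius kernel of `G`. -/
def IsFrobeniusKernel {G : Type*} [Group G] (K : Subgroup G) : Prop :=
  ∃ H : Subgroup G, IsFrobeniusKernelOf K H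

/-- `G` is a 2-Frobenius group. -/
def IsTwoFrobenius (G : Type*) [Group G] : Prop :=
  ∃ K L : Subgroup G, ∃ hK : K.Normal, L.Normal ∧ K ≤ L ∧
    IsFrobeniusKernel (K.subgroupOf L) ∧
    (haveI := hK; IsFrobeniusKernel (Subgroup.map (QuotientGroup.mk' K) L))

/-- The Fitting subgroup: the largest normal nilpotent subgroup (of a finite group). -/
def fitting (G : Type*) [Group G] : Subgroup G :=
  sSup {H : Subgroup G | H.Normal ∧ Group.IsNilpotent ↥H}

section Aux

variable {G : Type*} [Group G]

lemma upperCentralSeries_subgroupOf_le (H : Subgroup G) :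
    ∀ n, (Subgroup.upperCentralSeries G n).subgroupOf H ≤ Subgroup.upperCentralSeries H n := by
  intro n
  induction n with
  | zero =>
      intro h hh
      simp only [upperCentralSeries_zero, Subgroup.mem_subgroupOf, Subgroup.mem_bot] at hh ⊢
      exact Subtype.ext hh
  | succ n ih =>
      intro h hh
      rw [Subgroup.mem_subgroupOf, mem_upperCentralSeries_succ_iff] at hh
      rw [mem_upperCentralSeries_succ_iff]
      intro k
      apply ih
      rw [Subgroup.mem_subgroupOf]
      exact hh (k : G)

lemma nilpotent_closure_of_mem_hypercenter [Finite G] {x y : G} (hx : x ∈ hypercenter G) :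
    Group.IsNilpotent ↥(Subgroup.closure ({x, y} : Set G)) := by
  set H := Subgroup.closure ({x, y} : Set G) with hHdef
  have hxH : x ∈ H := Subgroup.subset_closure (Set.mem_insert _ _)
  have hyH : y ∈ H := Subgroup.subset_closure (Set.mem_insert_of_mem _ rfl)
  set n := Nat.card G with hn
  set N := Subgroup.upperCentralSeries (↥H) n with hN
  have hx' : (⟨x, hxH⟩ : H) ∈ N :=
    upperCentralSeries_subgroupOf_le H n (by rwa [Subgroup.mem_subgroupOf])
  -- the quotient H ⧸ N is cyclic, generated by the image of y
  let π : ↥H →* ↥H ⧸ N := QuotientGroup.mk' N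
  have htopH : Subgroup.closure ({⟨x, hxH⟩, ⟨y, hyH⟩} : Set ↥H) = ⊤ := by
    rw [eq_top_iff, ← Subgroup.closure_closure_coe_preimage (k := ({x, y} : Set G))]
    apply Subgroup.closure_mono
    rintro ⟨z, hz⟩ hz'
    simp only [Set.mem_preimage] at hz'
    rcases hz' with h1 | h1
    · exact Or.inl (Subtype.ext h1)
    · exact Or.inr (Subtype.ext h1)
  have hcyc : ∀ q : ↥H ⧸ N, q ∈ Subgroup.zpowers (π ⟨y, hyH⟩) := by
    intro q
    have hsurj : Subgroup.map π ⊤ = ⊤ := by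
      rw [← MonoidHom.range_eq_map]
      exact MonoidHom.range_eq_top_of_surjective π (QuotientGroup.mk'_surjective N)
    have : q ∈ Subgroup.map π ⊤ := hsurj.symm ▸ Subgroup.mem_top q
    rw [← htopH, MonoidHom.map_closure] at this
    have himg : π '' ({⟨x, hxH⟩, ⟨y, hyH⟩} : Set ↥H) = {π ⟨x, hxH⟩, π ⟨y, hyH⟩} := by
      rw [Set.image_insert_eq, Set.image_singleton]
    rw [himg] at this
    have hπx : π ⟨x, hxH⟩ = 1 := by
      rw [QuotientGroup.mk'_apply, QuotientGroup.eq_one_iff]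
      exact hx'
    have hle : Subgroup.closure ({π ⟨x, hxH⟩, π ⟨y, hyH⟩} : Set (↥H ⧸ N)) ≤
        Subgroup.zpowers (π ⟨y, hyH⟩) := by
      rw [Subgroup.closure_le]
      rintro z (hz | hz)
      · rw [hz, hπx]; exact (Subgroup.zpowers (π ⟨y, hyH⟩)).one_mem
      · rw [hz]; exact Subgroup.mem_zpowers _
    exact hle this
  have hcyc' : IsCyclic (↥H ⧸ N) := ⟨⟨π ⟨y, hyH⟩, hcyc⟩⟩
  letI : CommGroup (↥H ⧸ N) := IsCyclic.commGroup
  have htop : Subgroup.upperCentralSeries (↥H) (n + 1) = ⊤ := by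
    rw [eq_top_iff]
    intro h _
    rw [mem_upperCentralSeries_succ_iff]
    intro k
    have : π (h * k * h⁻¹ * k⁻¹) = 1 := by
      rw [map_mul, map_mul, map_mul, map_inv, map_inv]
      rw [mul_comm (π h) (π k)]
      group
    rwa [QuotientGroup.mk'_apply, QuotientGroup.eq_one_iff] at this
  exact ⟨n + 1, htop⟩

lemma comm_of_mem_nilpotent [Finite G]
    (hA : ∀ (p : ℕ), p.Prime → ∀ P : Sylow p G, IsMulCommutative ↥(P : Subgroup G))
    (H : Subgroup G) (hH : Group.IsNilpotent ↥H) {a b : G} (ha : a ∈ H) (hb : b ∈ H) :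
    a * b = b * a := by
  obtain ⟨e⟩ := ((isNilpotent_of_finite_tfae (G := ↥H)).out 0 4).mp hH
  -- every Sylow subgroup of H is commutative
  have hcomm : ∀ (p : ℕ), p.Prime → ∀ P : Sylow p ↥H,
      ∀ u v : ↥(P : Subgroup ↥H), u * v = v * u := by
    intro p hp P u v
    haveI : Fact p.Prime := ⟨hp⟩
    obtain ⟨Q, hQ⟩ := (P.isPGroup'.map H.subtype).exists_le_sylow
    haveI := hA p hp Q
    have hu : ((u : ↥H) : G) ∈ Q := hQ ⟨(u : ↥H), u.2, rfl⟩
    have hv : ((v : ↥H) : G) ∈ Q := hQ ⟨(v : ↥H), v.2, rfl⟩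
    have := Subgroup.mul_comm_of_mem_isMulCommutative (H := (Q : Subgroup G)) hu hv
    exact Subtype.ext (Subtype.ext this)
  -- transfer commutativity along the equivalence e
  have key : ∀ u v : ↥H, u * v = v * u := by
    intro u v
    have : e.symm u * e.symm v = e.symm v * e.symm u := by
      funext p P
      exact hcomm p (Nat.prime_of_mem_primeFactors p.2) P _ _
    calc u * v = e (e.symm u * e.symm v) := by rw [map_mul, e.apply_symm_apply, e.apply_symm_apply]
    _ = e (e.symm v * e.symm u) := by rw [this]
    _ = v * u := by rw [map_mul, e.apply_symm_apply, e.apply_symm_apply]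
  exact congrArg Subtype.val (key ⟨a, ha⟩ ⟨b, hb⟩)

end Aux

/-- Theorem D: Γ(G) coincides with the commuting graph iff G is an A-group. -/
theorem stmt_3 (G : Type*) [Group G] [Finite G] :
    (((hypercenter G : Set G) = (Subgroup.center G : Set G)) ∧
        ∀ x y : G, x ∉ Subgroup.center G → y ∉ Subgroup.center G → x ≠ y →
          (Group.IsNilpotent ↥(Subgroup.closure ({x, y} : Set G)) ↔ x * y = y * x)) ↔
      ∀ (p : ℕ), p.Prime → ∀ P : Sylow p G, IsMulCommutative ↥(P : Subgroup G) := by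
  constructor
  · rintro ⟨-, hcomm⟩ p hp P
    constructor
    constructor
    rintro ⟨a, ha⟩ ⟨b, hb⟩
    refine Subtype.ext ?_
    show a * b = b * a
    by_contra hne
    have hxc : a ∉ Subgroup.center G := fun h => hne (Subgroup.mem_center_iff.mp h b).symm
    have hyc : b ∉ Subgroup.center G := fun h => hne (Subgroup.mem_center_iff.mp h a)
    have hxy : a ≠ b := fun h => hne (by rw [h])
    have hle : Subgroup.closure ({a, b} : Set G) ≤ P := by
      rw [Subgroup.closure_le]
      rintro z (hz | hz)
      · rw [hz]; exact ha
      · rw [hz]; exact hb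
    haveI : Fact p.Prime := ⟨hp⟩
    have hnil : Group.IsNilpotent ↥(Subgroup.closure ({a, b} : Set G)) :=
      (P.isPGroup'.to_le hle).isNilpotent
    exact hne ((hcomm a b hxc hyc hxy).mp hnil)
  · intro hA
    constructor
    · ext z
      constructor
      · intro hz
        refine Subgroup.mem_center_iff.mpr fun g => ?_
        have hnil := nilpotent_closure_of_mem_hypercenter (y := g) hz
        exact (comm_of_mem_nilpotent hA _ hnil
          (Subgroup.subset_closure (Set.mem_insert _ _))
          (Subgroup.subset_closure (Set.mem_insert_of_mem _ rfl))).symm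
      · intro hz
        have h1 : (1 : ℕ) ≤ Nat.card G := Nat.one_le_iff_ne_zero.mpr Nat.card_pos.ne'
        have := upperCentralSeries_mono G h1
        rw [upperCentralSeries_one] at this
        exact this hz
    · intro x y _ _ _
      constructor
      · intro hnil
        exact comm_of_mem_nilpotent hA _ hnil
          (Subgroup.subset_closure (Set.mem_insert _ _))
          (Subgroup.subset_closure (Set.mem_insert_of_mem _ rfl))
      · intro hxy
        have hpair : ∀ u ∈ ({x, y} : Set G), ∀ v ∈ ({x, y} : Set G), u * v = v * u := by
          rintro u (rfl | rfl) v (rfl | rfl) <;> simp [hxy]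
        letI := Subgroup.closureCommGroupOfComm hpair
        exact CommGroup.isNilpotent
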